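/- Let p be a prime, K a field of characteristic p, G a finite p-group, and C a right ideal of KG. If dim_K(C) < (\sqrt{8|G| + 1} - 1)/2, then C is self-orthogonal, i.e., \langle c, c' \rangle = 0 for all c, c' \in C. -/

import Mathlib

open MonoidAlgebra

attribute [local instance] Classical.propDecidable

/-- Coefficientwise (Schur) product on the group algebra. -/
noncomputable def schur {K G : Type*} [Semiring K] (f g : MonoidAlgebra K G) :
    MonoidAlgebra K G :=
  MonoidAlgebra.ofCoeff (Finsupp.zipWith (· * ·) (mul_zero 0) f.coeff g.coeff)

/-- `C` is a right ideal of the group algebra. -/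
def IsRightIdeal {K G : Type*} [Field K] [Group G]
    (C : Submodule K (MonoidAlgebra K G)) : Prop :=
  ∀ c ∈ C, ∀ v : MonoidAlgebra K G, c * v ∈ C

section Aux

variable {K G : Type*} [Field K] [Group G]

lemma schur_apply (f g : MonoidAlgebra K G) (x : G) : (schur f g).coeff x = f.coeff x * g.coeff x := rfl

lemma schur_comm (f g : MonoidAlgebra K G) : schur f g = schur g f :=
  MonoidAlgebra.ext <| Finsupp.ext fun x => mul_comm _ _

/-- `schur` as a bilinear map. -/
noncomputable def schurBil :
    MonoidAlgebra K G →ₗ[K] MonoidAlgebra K G →ₗ[K] MonoidAlgebra K G :=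
  LinearMap.mk₂ K schur
    (fun a b c => MonoidAlgebra.ext <| Finsupp.ext fun x => add_mul (a.coeff x) (b.coeff x) (c.coeff x))
    (fun r a b => MonoidAlgebra.ext <| Finsupp.ext fun x => mul_assoc r (a.coeff x) (b.coeff x))
    (fun a b c => MonoidAlgebra.ext <| Finsupp.ext fun x => mul_add (a.coeff x) (b.coeff x) (c.coeff x))
    (fun r a b => MonoidAlgebra.ext <| Finsupp.ext fun x => mul_left_comm (a.coeff x) r (b.coeff x))

lemma schurBil_apply (f g : MonoidAlgebra K G) : schurBil f g = schur f g := rfl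

lemma schur_mul_single (f g : MonoidAlgebra K G) (x : G) :
    schur f g * MonoidAlgebra.single x (1:K)
      = schur (f * MonoidAlgebra.single x 1) (g * MonoidAlgebra.single x 1) :=
  MonoidAlgebra.ext <| Finsupp.ext fun y => by
    rw [schur_apply, MonoidAlgebra.coeff_mul_single_apply, MonoidAlgebra.coeff_mul_single_apply,
      MonoidAlgebra.coeff_mul_single_apply, schur_apply, mul_one, mul_one, mul_one]

lemma monoidAlgebra_add_apply (a b : MonoidAlgebra K G) (g : G) : (a + b).coeff g = a.coeff g + b.coeff g := rfl

lemma monoidAlgebra_smul_apply {R : Type*} [SMulZeroClass R K] (r : R)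
    (a : MonoidAlgebra K G) (g : G) : (r • a).coeff g = r • a.coeff g := rfl

end Aux

/-- For a `p`-group `G` in characteristic `p`: if
`dim C < (√(8|G| + 1) - 1)/2`, then `C` is self-orthogonal. -/
theorem stmt19 {K G : Type*} [Field K] [Group G] [Fintype G]
    (p : ℕ) [Fact p.Prime] [CharP K p] (hG : IsPGroup p G)
    (C : Submodule K (MonoidAlgebra K G)) (hI : IsRightIdeal C)
    (hdim : (Module.finrank K ↥C : ℝ) <
      (Real.sqrt (8 * Fintype.card G + 1) - 1) / 2) :
    ∀ c ∈ C, ∀ c' ∈ C, ∑ g : G, c.coeff g * c'.coeff g = 0 := by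
  classical
  by_contra hcon
  push_neg at hcon
  obtain ⟨c, hc, c', hc', hS⟩ := hcon
  set n := Fintype.card G with hn
  -- the group algebra is finite dimensional of dimension `n`
  let basisG : Module.Basis G K (MonoidAlgebra K G) :=
    Module.Basis.ofRepr (MonoidAlgebra.coeffLinearEquiv K)
  haveI : Module.Finite K (MonoidAlgebra K G) := Module.Finite.of_basis basisG
  set d := Module.finrank K ↥C with hd
  -- arithmetic : d * (d+1) < 2 * n
  have hdn : (d + 1) * d < 2 * n := by
    have h0 : (0:ℝ) ≤ 8 * (n:ℝ) + 1 := by positivity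
    have h1 : (2 * (d:ℝ) + 1) < Real.sqrt (8 * (n:ℝ) + 1) := by
      push_cast at hdim ⊢
      linarith
    have h2 := Real.sq_sqrt h0
    have h3 : (2*(d:ℝ)+1)^2 < 8*(n:ℝ)+1 := by
      nlinarith [Real.sqrt_nonneg (8*(n:ℝ)+1)]
    have h4 : ((d:ℝ)+1) * (d:ℝ) < 2*(n:ℝ) := by nlinarith
    exact_mod_cast h4
  -- basis of C and span of Schur products
  let b := Module.finBasis K ↥C
  let F : Sym2 (Fin d) → MonoidAlgebra K G :=
    Sym2.lift ⟨fun i j => schur ((b i : MonoidAlgebra K G)) ((b j : MonoidAlgebra K G)),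
      fun i j => schur_comm _ _⟩
  let T : Finset (MonoidAlgebra K G) := Finset.image F Finset.univ
  let D : Submodule K (MonoidAlgebra K G) := Submodule.span K (T : Set (MonoidAlgebra K G))
  have hbC : ∀ i, ((b i : MonoidAlgebra K G)) ∈ C := fun i => (b i).2
  have hbD : ∀ i j, schur ((b i : MonoidAlgebra K G)) ((b j : MonoidAlgebra K G)) ∈ D := by
    intro i j
    refine Submodule.subset_span ?_
    refine Finset.mem_coe.2 (Finset.mem_image.2 ⟨s(i,j), Finset.mem_univ _, ?_⟩)
    exact Sym2.lift_mk _ i j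
  -- every Schur product of elements of C lies in D
  have hmemD : ∀ u, u ∈ C → ∀ v, v ∈ C → schur u v ∈ D := by
    intro u hu v hv
    have hueq : u = ∑ i, b.repr ⟨u, hu⟩ i • ((b i : MonoidAlgebra K G)) := by
      have h1 : ((⟨u, hu⟩ : ↥C) : MonoidAlgebra K G)
          = ((∑ i, b.repr ⟨u, hu⟩ i • b i : ↥C) : MonoidAlgebra K G) :=
        congrArg _ (b.sum_repr ⟨u, hu⟩).symm
      simpa only [Submodule.coe_sum, Submodule.coe_smul] using h1
    have hveq : v = ∑ j, b.repr ⟨v, hv⟩ j • ((b j : MonoidAlgebra K G)) := by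
      have h1 : ((⟨v, hv⟩ : ↥C) : MonoidAlgebra K G)
          = ((∑ j, b.repr ⟨v, hv⟩ j • b j : ↥C) : MonoidAlgebra K G) :=
        congrArg _ (b.sum_repr ⟨v, hv⟩).symm
      simpa only [Submodule.coe_sum, Submodule.coe_smul] using h1
    rw [← schurBil_apply, hueq, map_sum, LinearMap.sum_apply]
    refine Submodule.sum_mem _ fun i _ => ?_
    rw [map_smul, LinearMap.smul_apply]
    refine Submodule.smul_mem _ _ ?_
    rw [hveq, map_sum]
    refine Submodule.sum_mem _ fun j _ => ?_
    rw [map_smul]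
    exact Submodule.smul_mem _ _ (hbD i j)
  -- D is stable under right translations
  have hDmul : ∀ x ∈ D, ∀ g : G, x * MonoidAlgebra.single g (1:K) ∈ D := by
    intro x hx g
    induction hx using Submodule.span_induction with
    | mem t ht =>
      obtain ⟨z, -, rfl⟩ := Finset.mem_image.1 (Finset.mem_coe.1 ht)
      induction z using Sym2.ind with
      | _ i j =>
        rw [show F s(i,j) = schur ((b i : MonoidAlgebra K G)) ((b j : MonoidAlgebra K G))
          from Sym2.lift_mk _ i j, schur_mul_single]
        exact hmemD _ (hI _ (hbC i) _) _ (hI _ (hbC j) _)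
    | zero => rw [zero_mul]; exact zero_mem _
    | add a b' ha hb iha ihb => rw [add_mul]; exact add_mem iha ihb
    | smul r a ha ih => rw [smul_mul_assoc]; exact Submodule.smul_mem _ _ ih
  -- rank bound
  have hDrank : Module.finrank K ↥D < n := by
    have h1 : Module.finrank K ↥D ≤ T.card := finrank_span_finset_le_card T
    have h2 : T.card ≤ Fintype.card (Sym2 (Fin d)) := by
      refine le_trans Finset.card_image_le ?_
      simp
    have h3 : Fintype.card (Sym2 (Fin d)) = (d+1).choose 2 := by
      rw [Sym2.card]; simp
    have h4 : (d+1).choose 2 = (d+1)*d/2 := by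
      rw [Nat.choose_two_right]; simp
    have h5 : (d+1)*d/2 < n := by
      rw [Nat.div_lt_iff_lt_mul (by norm_num : 0 < 2)]
      omega
    omega
  have hfinrankKG : Module.finrank K (MonoidAlgebra K G) = n :=
    (Module.finrank_eq_card_basis basisG)
  have hDne : D ≠ ⊤ := by
    intro h
    have : Module.finrank K ↥D = n := by rw [h, finrank_top, hfinrankKG]
    omega
  obtain ⟨v, hv⟩ : ∃ v, v ∉ D := by
    by_contra hall
    push_neg at hall
    exact hDne (Submodule.eq_top_iff'.2 hall)
  -- a nonzero functional vanishing on D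
  have hqv : D.mkQ v ≠ 0 := by
    intro h
    exact hv ((Submodule.Quotient.mk_eq_zero D).1 (by simpa using h))
  have hex : ¬ ∀ φ : Module.Dual K (MonoidAlgebra K G ⧸ D), φ (D.mkQ v) = 0 := by
    intro hall
    exact hqv ((Module.forall_dual_apply_eq_zero_iff K _).1 hall)
  push_neg at hex
  obtain ⟨f0, hf0⟩ := hex
  set f : MonoidAlgebra K G →ₗ[K] K := f0.comp D.mkQ with hf
  have hfv : f v = f0 (D.mkQ v) := rfl
  -- decomposition of functionals
  have hxsum : ∀ x : MonoidAlgebra K G, x = ∑ g : G, MonoidAlgebra.single g (x.coeff g) := by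
    intro x
    refine MonoidAlgebra.ext <| Finsupp.ext fun h => ?_
    rw [MonoidAlgebra.coeff_sum, Finsupp.finset_sum_apply]
    simp [MonoidAlgebra.coeff_single_apply, Finsupp.single_apply]
  have hflin : ∀ x : MonoidAlgebra K G,
      f x = ∑ g : G, x.coeff g * f (MonoidAlgebra.single g 1) := by
    intro x
    conv_lhs => rw [hxsum x]
    rw [map_sum]
    refine Finset.sum_congr rfl fun g _ => ?_
    rw [show MonoidAlgebra.single g (x.coeff g) = x.coeff g • MonoidAlgebra.single g (1:K) by
      rw [MonoidAlgebra.smul_single', mul_one], map_smul, smul_eq_mul]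
  set u : MonoidAlgebra K G :=
    MonoidAlgebra.ofCoeff (Finsupp.equivFunOnFinite.symm (fun g => f (MonoidAlgebra.single g 1))) with hu
  have hu_apply : ∀ g, u.coeff g = f (MonoidAlgebra.single g 1) := fun g => rfl
  have hPu : ∀ x ∈ D, ∑ g : G, x.coeff g * u.coeff g = 0 := by
    intro x hx
    have hfx : f x = 0 := by
      rw [hf]
      simp only [LinearMap.comp_apply]
      rw [show D.mkQ x = 0 from (Submodule.Quotient.mk_eq_zero D).2 hx, map_zero]
    calc ∑ g : G, x.coeff g * u.coeff g = ∑ g : G, x.coeff g * f (MonoidAlgebra.single g 1) := by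
          simp only [hu_apply]
      _ = f x := (hflin x).symm
      _ = 0 := hfx
  have hune : u ≠ 0 := by
    intro h
    apply hf0
    rw [← hfv, hflin v]
    refine Finset.sum_eq_zero fun g _ => ?_
    rw [← hu_apply g, h]
    simp
  -- translation invariance of orthogonality to D
  have hPtrans : ∀ y : MonoidAlgebra K G, (∀ x ∈ D, ∑ g : G, x.coeff g * y.coeff g = 0) →
      ∀ g0 : G, ∀ x ∈ D, ∑ g : G, x.coeff g * (y * MonoidAlgebra.single g0 (1:K)).coeff g = 0 := by
    intro y hy g0 x hx
    calc ∑ h : G, x.coeff h * (y * MonoidAlgebra.single g0 (1:K)).coeff h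
        = ∑ h : G, x.coeff h * y.coeff (h * g0⁻¹) := by
          refine Finset.sum_congr rfl fun h _ => ?_
          rw [MonoidAlgebra.coeff_mul_single_apply, mul_one]
      _ = ∑ h : G, x.coeff (h * g0) * y.coeff h := by
          refine Fintype.sum_equiv (Equiv.mulRight g0⁻¹) _ _ fun h => ?_
          simp [mul_assoc]
      _ = ∑ h : G, (x * MonoidAlgebra.single g0⁻¹ (1:K)).coeff h * y.coeff h := by
          refine Finset.sum_congr rfl fun h _ => ?_
          rw [MonoidAlgebra.coeff_mul_single_apply, inv_inv, mul_one]
      _ = 0 := hy _ (hDmul x hx g0⁻¹)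
  -- the ZMod p span of the translates of u
  letI : Algebra (ZMod p) K := ZMod.algebra K p
  let W : Submodule (ZMod p) (MonoidAlgebra K G) :=
    Submodule.span (ZMod p) (Set.range fun g : G => u * MonoidAlgebra.single g (1:K))
  have hWmul : ∀ y ∈ W, ∀ g : G, y * MonoidAlgebra.single g (1:K) ∈ W := by
    intro y hy g
    induction hy using Submodule.span_induction with
    | mem t ht =>
      obtain ⟨h0, rfl⟩ := ht
      rw [mul_assoc, MonoidAlgebra.single_mul_single, one_mul]
      exact Submodule.subset_span ⟨h0 * g, rfl⟩
    | zero => rw [zero_mul]; exact zero_mem _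
    | add a b' ha hb iha ihb => rw [add_mul]; exact add_mem iha ihb
    | smul r a ha ih => rw [smul_mul_assoc]; exact Submodule.smul_mem _ _ ih
  have hWP : ∀ y ∈ W, ∀ x ∈ D, ∑ g : G, x.coeff g * y.coeff g = 0 := by
    intro y hy
    induction hy using Submodule.span_induction with
    | mem t ht =>
      obtain ⟨g0, rfl⟩ := ht
      exact hPtrans u hPu g0
    | zero => intro x hx; simp
    | add a b' ha hb iha ihb =>
      intro x hx
      simp only [monoidAlgebra_add_apply, mul_add, Finset.sum_add_distrib,
        iha x hx, ihb x hx, add_zero]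
    | smul r a ha ih =>
      intro x hx
      calc ∑ g : G, x.coeff g * (r • a).coeff g
          = algebraMap (ZMod p) K r * ∑ g : G, x.coeff g * a.coeff g := by
            rw [Finset.mul_sum]
            refine Finset.sum_congr rfl fun g _ => ?_
            rw [monoidAlgebra_smul_apply, Algebra.smul_def]
            ring
        _ = 0 := by rw [ih x hx, mul_zero]
  haveI : Module.Finite (ZMod p) ↥W := Module.Finite.span_of_finite _ (Set.finite_range _)
  haveI : Finite ↥W := Module.finite_of_finite (ZMod p)
  -- action of G on W by right translation
  letI actW : MulAction G ↥W :=
    { smul := fun g y => ⟨(y : MonoidAlgebra K G) * MonoidAlgebra.single g⁻¹ 1,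
        hWmul _ y.2 _⟩
      one_smul := fun y => Subtype.ext (by
        show (y : MonoidAlgebra K G) * MonoidAlgebra.single ((1:G))⁻¹ 1 = (y : MonoidAlgebra K G)
        rw [inv_one, ← MonoidAlgebra.one_def, mul_one])
      mul_smul := fun g h y => Subtype.ext (by
        show (y : MonoidAlgebra K G) * MonoidAlgebra.single ((g*h))⁻¹ 1
          = ((y : MonoidAlgebra K G) * MonoidAlgebra.single h⁻¹ 1) * MonoidAlgebra.single g⁻¹ 1
        rw [mul_assoc, MonoidAlgebra.single_mul_single, one_mul, mul_inv_rev]) }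
  have h0fix : (0 : ↥W) ∈ MulAction.fixedPoints G ↥W := by
    refine MulAction.mem_fixedPoints.2 fun g => Subtype.ext ?_
    show ((0:↥W) : MonoidAlgebra K G) * MonoidAlgebra.single g⁻¹ 1 = ((0:↥W) : MonoidAlgebra K G)
    simp
  have hu_memW : u ∈ W := by
    have h1 : u * MonoidAlgebra.single (1:G) (1:K) = u := by
      rw [← MonoidAlgebra.one_def, mul_one]
    exact h1 ▸ Submodule.subset_span ⟨1, rfl⟩
  have hpu : p • u = (0 : MonoidAlgebra K G) := by
    rw [← Nat.cast_smul_eq_nsmul K p u, CharP.cast_eq_zero, zero_smul]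
  have hord : addOrderOf (⟨u, hu_memW⟩ : ↥W) = p := by
    refine addOrderOf_eq_prime ?_ ?_
    · exact Subtype.ext (by simpa using hpu)
    · intro h
      exact hune (by simpa using congrArg Subtype.val h)
  have hpdvd : p ∣ Nat.card ↥W := by
    have h6 := addOrderOf_dvd_natCard (⟨u, hu_memW⟩ : ↥W)
    rwa [hord] at h6
  obtain ⟨w, hwfix, hwne⟩ :=
    hG.exists_fixed_point_of_prime_dvd_card_of_fixed_point (α := ↥W) hpdvd h0fix
  -- the fixed point is a nonzero constant vector
  have hwconst : ∀ h : G, (w : MonoidAlgebra K G).coeff h = (w : MonoidAlgebra K G).coeff 1 := by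
    intro h
    have h3 : (w : MonoidAlgebra K G) * MonoidAlgebra.single ((h⁻¹ : G))⁻¹ (1:K)
        = (w : MonoidAlgebra K G) :=
      congrArg Subtype.val ((MulAction.mem_fixedPoints.1 hwfix) h⁻¹)
    rw [inv_inv] at h3
    have h4 := congrArg (fun z : MonoidAlgebra K G => z.coeff h) h3
    simp only [MonoidAlgebra.coeff_mul_single_apply, mul_one, mul_inv_cancel] at h4
    exact h4.symm
  have hwne' : (w : MonoidAlgebra K G) ≠ 0 := by
    intro h0
    exact hwne (Subtype.ext h0.symm)
  have hk : (w : MonoidAlgebra K G).coeff 1 ≠ 0 := by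
    intro hk0
    apply hwne'
    refine MonoidAlgebra.ext <| Finsupp.ext fun h => ?_
    rw [hwconst h, hk0]
    simp
  -- final contradiction
  have hfinal := hWP (w : MonoidAlgebra K G) w.2 (schur c c') (hmemD c hc c' hc')
  have hzero : (∑ g : G, c.coeff g * c'.coeff g) * (w : MonoidAlgebra K G).coeff 1 = 0 := by
    rw [Finset.sum_mul, ← hfinal]
    refine Finset.sum_congr rfl fun g _ => ?_
    rw [schur_apply, hwconst g]
  rcases mul_eq_zero.1 hzero with h | h
  · exact hS h
  · exact hk h
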